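/- Let n, k, m be integers with k ≥ 3, n sufficiently large, and n/(2k^4) ≤ m < n/k. Let 0 < ε < 1/k and 0 < ϱ < ε/12. Let H be a k-uniform hypergraph on n vertices with δ_1(H) ≥ C(n−1, k−1) − C(n−m, k−1) − ϱ n^{k−1}, and suppose H does not ε-contain H_k(n, m). Then for every S ⊆ V(H) with |S| ≥ (1 − m/n − ε/7) n, the induced subhypergraph H[S] has at least ε n^k / (2k^2) edges. -/

import Mathlib

attribute [local instance 0] Classical.propDecidable

lemma count_containing (s : Finset ℕ) (a : ℕ) (ha : a ∈ s) (r : ℕ) :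
    ((s.powersetCard (r+1)).filter (fun e => a ∈ e)).card = (s.card - 1).choose r := by
  have h : ((s.powersetCard (r+1)).filter (fun e => a ∈ e)).card
      = ((s.erase a).powersetCard r).card := by
    refine Finset.card_bij' (fun e _ => e.erase a) (fun f _ => insert a f)
      ?_ ?_ ?_ ?_
    · intro e he
      simp only [Finset.mem_filter, Finset.mem_powersetCard] at he
      simp only [Finset.mem_powersetCard]
      exact ⟨Finset.erase_subset_erase a he.1.1,
        by rw [Finset.card_erase_of_mem he.2, he.1.2]; omega⟩
    · intro f hf
      simp only [Finset.mem_powersetCard] at hf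
      have haf : a ∉ f := fun h => (Finset.mem_erase.mp (hf.1 h)).1 rfl
      simp only [Finset.mem_filter, Finset.mem_powersetCard]
      refine ⟨⟨Finset.insert_subset ha (hf.1.trans (Finset.erase_subset a s)), ?_⟩,
        Finset.mem_insert_self a f⟩
      rw [Finset.card_insert_of_notMem haf, hf.2]
    · intro e he
      simp only [Finset.mem_filter] at he
      exact Finset.insert_erase he.2
    · intro f hf
      simp only [Finset.mem_powersetCard] at hf
      have haf : a ∉ f := fun h => (Finset.mem_erase.mp (hf.1 h)).1 rfl
      exact Finset.erase_insert haf
  rw [h, Finset.card_powersetCard, Finset.card_erase_of_mem ha]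

lemma sum_deg_eq (F : Finset (Finset ℕ)) (U : Finset ℕ) :
    ∑ u ∈ U, (F.filter (fun e => u ∈ e)).card = ∑ e ∈ F, (e ∩ U).card := by
  simp_rw [Finset.card_filter]
  rw [Finset.sum_comm]
  refine Finset.sum_congr rfl fun e _ => ?_
  rw [Finset.inter_comm, ← Finset.filter_mem_eq_inter, Finset.card_filter]

set_option maxHeartbeats 1000000 in
lemma arith_core (K N M a b c ε ϱ : ℝ) (hK : 3 ≤ K) (hε : 0 < ε) (hϱ : ϱ < ε/12)
    (hM : 0 < M) (hN0 : 0 < N) (hN : 2*K ≤ ε*N)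
    (h1 : ε*(N*M) < ϱ*(N*M) + K*a)
    (h2 : a ≤ b + (ε*N/7 + 1)*c)
    (h3 : (K-1)*c ≤ M) (hc : 0 ≤ c) (hb : 0 ≤ b) :
    ε*(N*M)/(2*K^2) ≤ b := by
  have hNM : 0 < N*M := mul_pos hN0 hM
  have hKpos : (0:ℝ) < K := by linarith
  have hK1 : (0:ℝ) < K - 1 := by linarith
  have hKK : (0:ℝ) ≤ K*(K-1) := by positivity
  have ha : K*a > (11/12)*(ε*(N*M)) := by nlinarith
  have h2' := mul_le_mul_of_nonneg_left h2 hKK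
  have h3' : (ε*N/7+1)*(K*((K-1)*c)) ≤ (ε*N/7+1)*(K*M) := by
    have h0 : 0 ≤ (ε*N/7+1)*K := by positivity
    nlinarith
  have hR : (K-1)*((11/12)*(ε*(N*M))) - (ε*N/7+1)*(K*M) ≤ K*(K-1)*b := by nlinarith
  have hc0'0 : (0:ℝ) ≤ (65/42)*K^2 - (17/6)*K + 1 := by nlinarith
  have hc0' : (65/42)*K^2 - (17/6)*K + 1 ≥ K := by nlinarith
  have h5 : ε*N*((65/42)*K^2 - (17/6)*K + 1) ≥ 2*K*K := by
    nlinarith [mul_le_mul_of_nonneg_right hN hc0'0,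
      mul_le_mul_of_nonneg_left hc0' (by linarith : (0:ℝ) ≤ 2*K)]
  have key := mul_le_mul_of_nonneg_right (le_of_lt (lt_of_lt_of_le (by linarith) h5)
    : 2*K*K - 1 ≤ ε*N*((65/42)*K^2 - (17/6)*K + 1)) hM.le
  have h6 : 2*K*((K-1)*((11/12)*(ε*(N*M))) - (ε*N/7+1)*(K*M)) ≥ (K-1)*(ε*(N*M)) := by
    nlinarith [key]
  have h7 : (K-1)*(ε*(N*M)) ≤ (K-1)*(2*K^2*b) := by
    nlinarith [mul_le_mul_of_nonneg_left hR (by linarith : (0:ℝ) ≤ 2*K)]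
  have h8 : ε*(N*M) ≤ 2*K^2*b := le_of_mul_le_mul_left h7 hK1
  rw [div_le_iff₀ (by positivity)]
  linarith

/-- Lemma (large induced subgraphs): let k ≥ 3, 0 < ε < 1/k, 0 < ϱ < ε/12. For
sufficiently large n and n/(2k⁴) ≤ m < n/k, if a k-graph H on n vertices has
δ₁(H) ≥ C(n−1,k−1) − C(n−m,k−1) − ϱ n^{k−1} and H does not ε-contain H_k(n,m),
then every vertex set S with |S| ≥ (1 − m/n − ε/7)n induces at least
ε n^k/(2k²) edges. -/
theorem induced_edges_of_not_contain (k : ℕ) (hk : 3 ≤ k) (ε ϱ : ℝ)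
    (hε : 0 < ε ∧ ε < 1 / (k : ℝ)) (hϱ : 0 < ϱ ∧ ϱ < ε / 12) :
    ∃ n₀ : ℕ, ∀ n m : ℕ, n₀ ≤ n →
      (n : ℝ) / (2 * (k : ℝ) ^ 4) ≤ (m : ℝ) → (m : ℝ) < (n : ℝ) / (k : ℝ) →
      ∀ E : Finset (Finset ℕ), (∀ e ∈ E, e ⊆ Finset.range n ∧ e.card = k) →
      (∀ v ∈ Finset.range n,
        (Nat.choose (n - 1) (k - 1) : ℝ) - Nat.choose (n - m) (k - 1) - ϱ * (n : ℝ) ^ (k - 1)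
          ≤ ((E.filter (fun e => v ∈ e)).card : ℝ)) →
      (¬ ∃ W ⊆ Finset.range n, W.card = m - 1 ∧
        (((((Finset.range n).powersetCard k).filter
            (fun e => 1 ≤ (e ∩ W).card ∧ (e ∩ W).card ≤ k - 1)) \ E).card : ℝ)
          ≤ ε * (n : ℝ) ^ k) →
      ∀ S ⊆ Finset.range n, (1 - (m : ℝ) / n - ε / 7) * n ≤ (S.card : ℝ) →
        ε * (n : ℝ) ^ k / (2 * (k : ℝ) ^ 2) ≤ ((E.filter (fun e => e ⊆ S)).card : ℝ) := by
  obtain ⟨hε0, hεk⟩ := hε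
  obtain ⟨hϱ0, hϱε⟩ := hϱ
  refine ⟨⌈2*(k:ℝ)/ε⌉₊ + 1, ?_⟩
  intro n m hn hm1 hm2 E hE hdeg hnc S hS hScard
  have hk3 : (3:ℝ) ≤ (k:ℝ) := by exact_mod_cast hk
  have hk0 : (0:ℝ) < k := by linarith
  have hn1 : 1 ≤ n := le_trans (by omega) hn
  have hnR : (0:ℝ) < n := by
    have : (1:ℝ) ≤ n := by exact_mod_cast hn1
    linarith
  have hεn : 2*(k:ℝ) ≤ ε * n := by
    have h1 := Nat.le_ceil (2*(k:ℝ)/ε)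
    have h2 : ((⌈2*(k:ℝ)/ε⌉₊ + 1 : ℕ):ℝ) ≤ n := by exact_mod_cast hn
    have h3 : 2*(k:ℝ)/ε ≤ n := by push_cast at h2; linarith
    rw [div_le_iff₀ hε0] at h3; linarith
  have hm0 : 1 ≤ m := by
    by_contra h
    have hm : m = 0 := by omega
    rw [hm] at hm1
    simp only [Nat.cast_zero] at hm1
    have : (0:ℝ) < (n:ℝ) / (2 * (k:ℝ)^4) := by positivity
    linarith
  have hmnR : (m:ℝ) < n := by
    have : (n:ℝ)/(k:ℝ) ≤ n := by
      rw [div_le_iff₀ hk0]; nlinarith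
    linarith
  have hmn : m < n := by exact_mod_cast hmnR
  have hm1R : ((m - 1 : ℕ):ℝ) = (m:ℝ) - 1 := by
    rw [Nat.cast_sub hm0, Nat.cast_one]
  have hScn : S.card ≤ n := by
    have := Finset.card_le_card hS
    rwa [Finset.card_range] at this
  have hk1 : k = (k-1) + 1 := by omega
  -- |T| bound
  set T := Finset.range n \ S with hT
  have hTcard : ((T.card:ℝ)) ≤ (m:ℝ) + ε*n/7 := by
    have h1 : T.card = n - S.card := by rw [hT, Finset.card_sdiff_of_subset hS, Finset.card_range]
    have h2 : ((T.card):ℝ) = (n:ℝ) - S.card := by rw [h1, Nat.cast_sub hScn]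
    have h3 : (1 - (m:ℝ)/n - ε/7)*n = (n:ℝ) - m - ε*n/7 := by field_simp
    rw [h3] at hScard
    linarith
  -- choose W
  obtain ⟨W, hWsub, hWcard, hDW⟩ : ∃ W, W ⊆ Finset.range n ∧ W.card = m - 1 ∧
      ((T \ W).card : ℝ) ≤ ε*n/7 + 1 := by
    by_cases hc : T.card ≤ m - 1
    · obtain ⟨W, hTW, hWr, hWc⟩ := Finset.exists_subsuperset_card_eq
        (show T ⊆ Finset.range n from Finset.sdiff_subset) hc
        (by rw [Finset.card_range]; omega)
      refine ⟨W, hWr, hWc, ?_⟩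
      have he : T \ W = ∅ := Finset.sdiff_eq_empty_iff_subset.mpr hTW
      rw [he]
      simp only [Finset.card_empty, Nat.cast_zero]
      positivity
    · push_neg at hc
      obtain ⟨W, hWT, hWc⟩ := Finset.exists_subset_card_eq (le_of_lt hc)
      refine ⟨W, hWT.trans Finset.sdiff_subset, hWc, ?_⟩
      have h1 : (T\W).card = T.card - (m-1) := by rw [Finset.card_sdiff_of_subset hWT, hWc]
      have h2 : ((T\W).card:ℝ) = (T.card:ℝ) - ((m-1:ℕ):ℝ) := by
        rw [h1, Nat.cast_sub (le_of_lt hc)]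
      rw [hm1R] at h2
      linarith
  set U := Finset.range n \ W with hU
  have hUsub : U ⊆ Finset.range n := Finset.sdiff_subset
  have hUcard : U.card = n - (m-1) := by
    rw [hU, Finset.card_sdiff_of_subset hWsub, Finset.card_range, hWcard]
  set P := ((Finset.range n).powersetCard k).filter
    (fun e => 1 ≤ (e ∩ W).card ∧ (e ∩ W).card ≤ k - 1) with hP
  have hmiss : ε * (n:ℝ)^k < ((P \ E).card : ℝ) := by
    by_contra h
    push_neg at h
    exact hnc ⟨W, hWsub, hWcard, h⟩
  set eU := E.filter (fun e => e ∩ W = ∅) with heU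
  -- per-vertex bound
  have key : ∀ u ∈ U, (((P \ E).filter (fun e => u ∈ e)).card : ℝ)
      ≤ ϱ*(n:ℝ)^(k-1) + ((eU.filter (fun e => u ∈ e)).card : ℝ) := by
    intro u hu
    have hur : u ∈ Finset.range n := hUsub hu
    have huW : u ∉ W := (Finset.mem_sdiff.mp hu).2
    set X := ((Finset.range n).powersetCard k).filter (fun e => u ∈ e) with hX
    set Y := (U.powersetCard k).filter (fun e => u ∈ e) with hY
    have hXcard : X.card = (n-1).choose (k-1) := by
      have h := count_containing (Finset.range n) u hur (k-1)
      rw [← hk1, Finset.card_range] at h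
      exact h
    have huU : u ∈ U := hu
    have hYcard : Y.card = (n - m).choose (k-1) := by
      have h := count_containing U u huU (k-1)
      rw [← hk1, hUcard] at h
      rw [hY, h]
      congr 1
      omega
    have hYX : Y ⊆ X :=
      Finset.filter_subset_filter _ (Finset.powersetCard_mono hUsub)
    have hPfu : P.filter (fun e => u ∈ e) ⊆ X \ Y := by
      intro e he
      simp only [hP, hX, hY, Finset.mem_filter, Finset.mem_sdiff,
        Finset.mem_powersetCard] at he ⊢
      obtain ⟨⟨⟨hesub, hecard⟩, hW1, hW2⟩, hue⟩ := he
      refine ⟨⟨⟨hesub, hecard⟩, hue⟩, ?_⟩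
      rintro ⟨⟨heU', -⟩, -⟩
      have : e ∩ W = ∅ := by
        ext x
        simp only [Finset.mem_inter, Finset.notMem_empty, iff_false, not_and]
        intro hxe hxW
        exact (Finset.mem_sdiff.mp (heU' hxe)).2 hxW
      rw [this] at hW1
      simp at hW1
    have hPfuc : (P.filter (fun e => u ∈ e)).card
        ≤ (n-1).choose (k-1) - (n-m).choose (k-1) := by
      calc (P.filter (fun e => u ∈ e)).card ≤ (X \ Y).card := Finset.card_le_card hPfu
        _ = X.card - Y.card := Finset.card_sdiff_of_subset hYX
        _ = (n-1).choose (k-1) - (n-m).choose (k-1) := by rw [hXcard, hYcard]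
    set A := E.filter (fun e => u ∈ e) with hA
    set B := eU.filter (fun e => u ∈ e) with hB
    have hBA : B ⊆ A := by
      intro e he
      simp only [hA, hB, heU, Finset.mem_filter] at he ⊢
      tauto
    set PE := (P.filter (fun e => u ∈ e)).filter (fun e => e ∈ E) with hPE
    have hAB : A \ B ⊆ PE := by
      intro e he
      simp only [hA, hB, heU, hPE, hP, Finset.mem_sdiff, Finset.mem_filter,
        Finset.mem_powersetCard, not_and] at he ⊢
      obtain ⟨⟨heE, hue⟩, hnB⟩ := he
      have hWne : e ∩ W ≠ ∅ := fun hcon => hnB ⟨heE, hcon⟩ hue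
      obtain ⟨hesub, hecard⟩ := hE e heE
      have h1 : 1 ≤ (e ∩ W).card := by
        rcases Finset.eq_empty_or_nonempty (e ∩ W) with h | h
        · exact absurd h hWne
        · exact Finset.card_pos.mpr h
      have h2 : (e ∩ W).card ≤ k - 1 := by
        have hsub2 : e ∩ W ⊆ e.erase u := by
          intro x hx
          simp only [Finset.mem_inter] at hx
          exact Finset.mem_erase.mpr ⟨fun hxu => huW (hxu ▸ hx.2), hx.1⟩
        calc (e ∩ W).card ≤ (e.erase u).card := Finset.card_le_card hsub2
          _ = k - 1 := by rw [Finset.card_erase_of_mem hue, hecard]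
      exact ⟨⟨⟨⟨hesub, hecard⟩, h1, h2⟩, hue⟩, heE⟩
    have hABc : A.card - B.card ≤ PE.card := by
      calc A.card - B.card = (A \ B).card := (Finset.card_sdiff_of_subset hBA).symm
        _ ≤ PE.card := Finset.card_le_card hAB
    have hsplitu : (P.filter (fun e => u ∈ e)).card
        = PE.card + ((P \ E).filter (fun e => u ∈ e)).card := by
      have h0 := Finset.card_filter_add_card_filter_not
        (s := P.filter (fun e => u ∈ e)) (p := fun e => e ∈ E)
      have h1 : (P.filter (fun e => u ∈ e)).filter (fun e => e ∉ E)
          = (P \ E).filter (fun e => u ∈ e) := by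
        ext e
        simp only [Finset.mem_filter, Finset.mem_sdiff]
        tauto
      rw [h1] at h0
      rw [← h0, hPE]
    -- combine
    have hdegu := hdeg u hur
    have hcast1 : ((n-m).choose (k-1)) ≤ ((n-1).choose (k-1)) :=
      Nat.choose_le_choose _ (by omega)
    have hBAc : B.card ≤ A.card := Finset.card_le_card hBA
    have hc2 : (((P \ E).filter (fun e => u ∈ e)).card : ℝ)
        ≤ ((n-1).choose (k-1) : ℝ) - ((n-m).choose (k-1) : ℝ) - (A.card : ℝ) + B.card := by
      have e1 : (PE.card : ℝ) + (((P \ E).filter (fun e => u ∈ e)).card : ℝ)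
          = ((P.filter (fun e => u ∈ e)).card : ℝ) := by exact_mod_cast hsplitu.symm
      have e2 : ((P.filter (fun e => u ∈ e)).card : ℝ)
          ≤ ((n-1).choose (k-1) : ℝ) - ((n-m).choose (k-1) : ℝ) := by
        have := (Nat.cast_le (α := ℝ)).mpr hPfuc
        rw [Nat.cast_sub hcast1] at this
        exact this
      have e3 : (A.card : ℝ) - (B.card : ℝ) ≤ (PE.card : ℝ) := by
        have := (Nat.cast_le (α := ℝ)).mpr hABc
        rw [Nat.cast_sub hBAc] at this
        exact this
      linarith
    rw [hA] at hc2
    linarith [hdegu, hc2]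
  -- sum over U
  have hsum1 : ((P\E).card : ℝ) ≤ ∑ u ∈ U, (((P\E).filter (fun e => u ∈ e)).card : ℝ) := by
    have h0 : (P\E).card ≤ ∑ u ∈ U, ((P\E).filter (fun e => u ∈ e)).card := by
      rw [sum_deg_eq]
      have h1 : ∀ e ∈ P \ E, 1 ≤ (e ∩ U).card := by
        intro e he
        have heP : e ∈ P := (Finset.mem_sdiff.mp he).1
        simp only [hP, Finset.mem_filter, Finset.mem_powersetCard] at heP
        obtain ⟨⟨hesub, hecard⟩, hW1, hW2⟩ := heP
        have h2 : e ∩ U = e \ W := by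
          ext x
          simp only [hU, Finset.mem_inter, Finset.mem_sdiff]
          constructor
          · rintro ⟨hxe, -, hxW⟩; exact ⟨hxe, hxW⟩
          · rintro ⟨hxe, hxW⟩; exact ⟨hxe, hesub hxe, hxW⟩
        have h3 := Finset.card_inter_add_card_sdiff e W
        rw [h2]
        omega
      calc (P\E).card = ∑ _e ∈ P\E, 1 := by simp
        _ ≤ ∑ e ∈ P\E, (e ∩ U).card := Finset.sum_le_sum h1
    calc ((P\E).card : ℝ) ≤ ((∑ u ∈ U, ((P\E).filter (fun e => u ∈ e)).card : ℕ) : ℝ) := by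
          exact_mod_cast h0
      _ = ∑ u ∈ U, (((P\E).filter (fun e => u ∈ e)).card : ℝ) := by push_cast; ring
  have hsum2 : ∑ u ∈ U, ((eU.filter (fun e => u ∈ e)).card) = k * eU.card := by
    rw [sum_deg_eq]
    have h1 : ∀ e ∈ eU, (e ∩ U).card = k := by
      intro e he
      simp only [heU, Finset.mem_filter] at he
      obtain ⟨heE, heW⟩ := he
      obtain ⟨hesub, hecard⟩ := hE e heE
      have h2 : e ∩ U = e := by
        ext x
        simp only [hU, Finset.mem_inter, Finset.mem_sdiff]
        constructor
        · tauto
        · intro hxe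
          refine ⟨hxe, hesub hxe, fun hxW => ?_⟩
          have : x ∈ e ∩ W := Finset.mem_inter.mpr ⟨hxe, hxW⟩
          rw [heW] at this
          exact absurd this (Finset.notMem_empty x)
      rw [h2, hecard]
    rw [Finset.sum_congr rfl h1, Finset.sum_const, smul_eq_mul, mul_comm]
  have hUn : (U.card:ℝ) ≤ n := by
    have := Finset.card_le_card hUsub
    rw [Finset.card_range] at this
    exact_mod_cast this
  have hpowsplit : (n:ℝ)^k = (n:ℝ) * (n:ℝ)^(k-1) := by
    conv_lhs => rw [hk1]
    rw [pow_succ]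
    ring
  have hmain : ε * ((n:ℝ) * (n:ℝ)^(k-1)) < ϱ*((n:ℝ) * (n:ℝ)^(k-1)) + (k:ℝ) * (eU.card:ℝ) := by
    have h1 : ∑ u ∈ U, (((P\E).filter (fun e => u ∈ e)).card : ℝ)
        ≤ ∑ u ∈ U, (ϱ*(n:ℝ)^(k-1) + ((eU.filter (fun e => u ∈ e)).card : ℝ)) :=
      Finset.sum_le_sum key
    have h2 : ∑ u ∈ U, (ϱ*(n:ℝ)^(k-1) + ((eU.filter (fun e => u ∈ e)).card : ℝ))
        = (U.card : ℝ) * (ϱ*(n:ℝ)^(k-1)) + (k:ℝ) * (eU.card:ℝ) := by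
      rw [Finset.sum_add_distrib, Finset.sum_const, nsmul_eq_mul]
      congr 1
      calc ∑ u ∈ U, ((eU.filter (fun e => u ∈ e)).card : ℝ)
          = ((∑ u ∈ U, (eU.filter (fun e => u ∈ e)).card : ℕ) : ℝ) := by push_cast; ring
        _ = (k:ℝ) * (eU.card:ℝ) := by rw [hsum2]; push_cast; ring
    have h3 : (U.card : ℝ) * (ϱ*(n:ℝ)^(k-1)) ≤ (n:ℝ) * (ϱ*(n:ℝ)^(k-1)) := by
      apply mul_le_mul_of_nonneg_right hUn
      positivity
    rw [hpowsplit] at hmiss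
    linarith [hmiss, hsum1, h1, h3, h2.le, h2.ge]
  -- eU vs eS
  set D := U \ S with hD
  have hDsub : D ⊆ T \ W := by
    intro x hx
    simp only [hD, hU, hT, Finset.mem_sdiff] at hx ⊢
    tauto
  have hDcard : (D.card:ℝ) ≤ ε*n/7 + 1 := by
    have := Finset.card_le_card hDsub
    have h2 : (D.card : ℝ) ≤ ((T \ W).card : ℝ) := by exact_mod_cast this
    linarith
  set eS := E.filter (fun e => e ⊆ S) with heS
  have hsplit2 : (eU.card:ℝ) ≤ (eS.card:ℝ) + (D.card:ℝ) * (((n-1).choose (k-1)):ℝ) := by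
    have hsub : eU ⊆ eS ∪ D.biUnion (fun d => E.filter (fun e => d ∈ e)) := by
      intro e he
      simp only [heU, Finset.mem_filter] at he
      obtain ⟨heE, heW⟩ := he
      by_cases hcs : e ⊆ S
      · exact Finset.mem_union_left _ (by simp [heS, Finset.mem_filter]; exact ⟨heE, hcs⟩)
      · obtain ⟨d, hde, hdS⟩ := Finset.not_subset.mp hcs
        refine Finset.mem_union_right _ (Finset.mem_biUnion.mpr ⟨d, ?_, ?_⟩)
        · simp only [hD, hU, Finset.mem_sdiff]
          obtain ⟨hesub, -⟩ := hE e heE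
          refine ⟨⟨hesub hde, fun hdW => ?_⟩, hdS⟩
          have : d ∈ e ∩ W := Finset.mem_inter.mpr ⟨hde, hdW⟩
          rw [heW] at this
          exact absurd this (Finset.notMem_empty d)
        · simp only [Finset.mem_filter]
          exact ⟨heE, hde⟩
    have hcard1 : eU.card ≤ eS.card + ∑ d ∈ D, (E.filter (fun e => d ∈ e)).card := by
      calc eU.card ≤ (eS ∪ D.biUnion (fun d => E.filter (fun e => d ∈ e))).card :=
            Finset.card_le_card hsub
        _ ≤ eS.card + (D.biUnion (fun d => E.filter (fun e => d ∈ e))).card :=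
            Finset.card_union_le _ _
        _ ≤ eS.card + ∑ d ∈ D, (E.filter (fun e => d ∈ e)).card := by
            gcongr
            exact Finset.card_biUnion_le
    have hdeg_bound : ∀ d ∈ D, (E.filter (fun e => d ∈ e)).card ≤ (n-1).choose (k-1) := by
      intro d hd
      have hdr : d ∈ Finset.range n := hUsub (Finset.mem_sdiff.mp hd).1
      have hsub2 : E.filter (fun e => d ∈ e)
          ⊆ ((Finset.range n).powersetCard k).filter (fun e => d ∈ e) := by
        intro e he
        simp only [Finset.mem_filter, Finset.mem_powersetCard] at he ⊢
        exact ⟨hE e he.1, he.2⟩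
      calc (E.filter (fun e => d ∈ e)).card
          ≤ (((Finset.range n).powersetCard k).filter (fun e => d ∈ e)).card :=
            Finset.card_le_card hsub2
        _ = (n-1).choose (k-1) := by
            have h := count_containing (Finset.range n) d hdr (k-1)
            rw [← hk1, Finset.card_range] at h
            exact h
    have hcard2 : (∑ d ∈ D, (E.filter (fun e => d ∈ e)).card : ℕ)
        ≤ D.card * (n-1).choose (k-1) := by
      calc (∑ d ∈ D, (E.filter (fun e => d ∈ e)).card : ℕ)
          ≤ ∑ _d ∈ D, (n-1).choose (k-1) := Finset.sum_le_sum hdeg_bound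
        _ = D.card * (n-1).choose (k-1) := by rw [Finset.sum_const, smul_eq_mul]
    have : eU.card ≤ eS.card + D.card * (n-1).choose (k-1) := le_trans hcard1 (by omega)
    have hcast := (Nat.cast_le (α := ℝ)).mpr this
    push_cast at hcast
    linarith
  have hchoose : ((k:ℝ)-1) * (((n-1).choose (k-1)):ℝ) ≤ (n:ℝ)^(k-1) := by
    have h1 : (k-1) * ((n-1).choose (k-1)) ≤ (Nat.factorial (k-1)) * ((n-1).choose (k-1)) :=
      Nat.mul_le_mul_right _ (Nat.self_le_factorial _)
    have h2 : (Nat.factorial (k-1)) * ((n-1).choose (k-1)) = (n-1).descFactorial (k-1) :=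
      (Nat.descFactorial_eq_factorial_mul_choose _ _).symm
    have h3 : (n-1).descFactorial (k-1) ≤ (n-1)^(k-1) := Nat.descFactorial_le_pow _ _
    have h4 : (n-1)^(k-1) ≤ n^(k-1) := Nat.pow_le_pow_left (by omega) _
    have h5 : (k-1) * ((n-1).choose (k-1)) ≤ n^(k-1) := by omega
    have hkc : ((k-1 : ℕ):ℝ) = (k:ℝ) - 1 := by
      rw [Nat.cast_sub (by omega : 1 ≤ k), Nat.cast_one]
    rw [← hkc]
    exact_mod_cast h5
  -- final
  have harg2 : (eU.card:ℝ) ≤ (eS.card:ℝ)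
      + (ε*(n:ℝ)/7 + 1) * (((n-1).choose (k-1)):ℝ) := by
    have hint := mul_le_mul_of_nonneg_right hDcard
      (Nat.cast_nonneg ((n-1).choose (k-1)) : (0:ℝ) ≤ _)
    linarith [hsplit2, hint]
  have hfinal := arith_core (k:ℝ) (n:ℝ) ((n:ℝ)^(k-1)) (eU.card:ℝ) (eS.card:ℝ)
    (((n-1).choose (k-1)):ℝ) ε ϱ hk3 hε0 hϱε (by positivity) hnR hεn hmain
    harg2 hchoose (Nat.cast_nonneg _) (Nat.cast_nonneg _)
  rw [hpowsplit]
  exact hfinal
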